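/- There exists a constant C > 0 such that for all natural numbers h ≥ 1, the sum ∑_{k=0}^{h} (h choose k) · catalan k is at most C · 5^h / h^{3/2}. -/

import Mathlib

open Finset

lemma cb_sq_bound (n : ℕ) : n.centralBinom ^ 2 * (3 * n + 1) ≤ 16 ^ n := by
  induction n with
  | zero => simp [Nat.centralBinom]
  | succ n ih =>
    have h := Nat.succ_mul_centralBinom_succ n
    have hpoly : (2 * (2 * n + 1)) ^ 2 * (3 * (n + 1) + 1) ≤ 16 * ((n + 1) ^ 2 * (3 * n + 1)) := by
      nlinarith
    have key : (n + 1) ^ 2 * (3 * n + 1) * (Nat.centralBinom (n + 1) ^ 2 * (3 * (n + 1) + 1))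
        ≤ (n + 1) ^ 2 * (3 * n + 1) * 16 ^ (n + 1) := by
      calc (n + 1) ^ 2 * (3 * n + 1) * (Nat.centralBinom (n + 1) ^ 2 * (3 * (n + 1) + 1))
          = ((n + 1) * Nat.centralBinom (n + 1)) ^ 2 * (3 * (n + 1) + 1) * (3 * n + 1) := by ring
        _ = (2 * (2 * n + 1)) ^ 2 * (3 * (n + 1) + 1) * (Nat.centralBinom n ^ 2 * (3 * n + 1)) := by
            rw [h]; ring
        _ ≤ (2 * (2 * n + 1)) ^ 2 * (3 * (n + 1) + 1) * 16 ^ n := Nat.mul_le_mul_left _ ih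
        _ ≤ 16 * ((n + 1) ^ 2 * (3 * n + 1)) * 16 ^ n := Nat.mul_le_mul_right _ hpoly
        _ = (n + 1) ^ 2 * (3 * n + 1) * 16 ^ (n + 1) := by ring
    exact Nat.le_of_mul_le_mul_left key (by positivity)

lemma nat_point (k : ℕ) : catalan k ^ 2 * ((k + 1) ^ 2 * (k + 2)) ≤ 2 * 16 ^ k := by
  have hcb : catalan k ^ 2 * ((k + 1) ^ 2 * (3 * k + 1)) ≤ 16 ^ k := by
    have := cb_sq_bound k
    rw [← succ_mul_catalan_eq_centralBinom k] at this
    calc catalan k ^ 2 * ((k + 1) ^ 2 * (3 * k + 1))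
        = ((k + 1) * catalan k) ^ 2 * (3 * k + 1) := by ring
      _ ≤ 16 ^ k := this
  calc catalan k ^ 2 * ((k + 1) ^ 2 * (k + 2))
      ≤ catalan k ^ 2 * ((k + 1) ^ 2 * (2 * (3 * k + 1))) := by
        exact Nat.mul_le_mul_left _ (Nat.mul_le_mul_left _ (by omega))
    _ = 2 * (catalan k ^ 2 * ((k + 1) ^ 2 * (3 * k + 1))) := by ring
    _ ≤ 2 * 16 ^ k := Nat.mul_le_mul_left _ hcb

lemma binom5 (n : ℕ) : (∑ j ∈ range (n + 1), n.choose j * 4 ^ j) = 5 ^ n := by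
  have h := add_pow (4 : ℕ) 1 n
  simp only [one_pow, mul_one] at h
  rw [show (4 + 1 : ℕ) = 5 by norm_num] at h
  rw [← h.symm]
  exact Finset.sum_congr rfl fun j _ => by push_cast; ring

lemma natA (n : ℕ) : ∑ k ∈ range (n + 1), (n + 1).choose (k + 1) * 4 ^ (k + 1) ≤ 5 ^ (n + 1) := by
  rw [← binom5 (n + 1), Finset.sum_range_succ' (fun j => (n + 1).choose j * 4 ^ j) (n + 1)]
  simp

lemma natB (n : ℕ) : ∑ k ∈ range (n + 1), (n + 2).choose (k + 2) * 4 ^ (k + 2) ≤ 5 ^ (n + 2) := by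
  rw [← binom5 (n + 2), Finset.sum_range_succ' (fun j => (n + 2).choose j * 4 ^ j) (n + 2),
    Finset.sum_range_succ' (fun j => (n + 2).choose (j + 1) * 4 ^ (j + 1)) (n + 1)]
  exact le_add_of_le_of_nonneg (le_add_of_le_of_nonneg le_rfl (Nat.zero_le _)) (Nat.zero_le _)

lemma idA (h k : ℕ) : (h.choose k : ℝ) * 4 ^ k / (k + 1) =
    ((h + 1).choose (k + 1) * 4 ^ (k + 1) : ℕ) / (4 * (h + 1)) := by
  have hc' : ((h : ℝ) + 1) * h.choose k = (h + 1).choose (k + 1) * (k + 1) := by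
    exact_mod_cast Nat.add_one_mul_choose_eq h k
  push_cast
  field_simp
  linear_combination (4 : ℝ) * 4 ^ k * hc'

lemma idB (h k : ℕ) : (h.choose k : ℝ) * 4 ^ k / ((k + 1) * (k + 2)) =
    ((h + 2).choose (k + 2) * 4 ^ (k + 2) : ℕ) / (16 * (h + 1) * (h + 2)) := by
  have hc1 : ((h : ℝ) + 1) * h.choose k = (h + 1).choose (k + 1) * (k + 1) := by
    exact_mod_cast Nat.add_one_mul_choose_eq h k
  have hc2 : ((h : ℝ) + 2) * (h + 1).choose (k + 1) = (h + 2).choose (k + 2) * (k + 2) := by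
    exact_mod_cast Nat.add_one_mul_choose_eq (h + 1) (k + 1)
  push_cast
  field_simp
  linear_combination (16 : ℝ) * 4 ^ k * (((h : ℝ) + 2) * hc1 + ((k : ℝ) + 1) * hc2)

lemma sumA (h : ℕ) : ∑ k ∈ range (h + 1), (h.choose k : ℝ) * 4 ^ k / (k + 1)
    ≤ 5 ^ (h + 1) / (4 * (h + 1)) := by
  calc ∑ k ∈ range (h + 1), (h.choose k : ℝ) * 4 ^ k / (k + 1)
      = (∑ k ∈ range (h + 1), ((h + 1).choose (k + 1) * 4 ^ (k + 1) : ℕ) : ℝ) / (4 * (h + 1)) := by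
        rw [Finset.sum_div]
        push_cast
        exact Finset.sum_congr rfl fun k _ => by have := idA h k; push_cast at this; exact this
    _ ≤ (5 ^ (h + 1) : ℝ) / (4 * (h + 1)) := by
        gcongr
        exact_mod_cast natA h

lemma sumB (h : ℕ) : ∑ k ∈ range (h + 1), (h.choose k : ℝ) * 4 ^ k / ((k + 1) * (k + 2))
    ≤ 5 ^ (h + 2) / (16 * (h + 1) * (h + 2)) := by
  calc ∑ k ∈ range (h + 1), (h.choose k : ℝ) * 4 ^ k / ((k + 1) * (k + 2))
      = (∑ k ∈ range (h + 1), ((h + 2).choose (k + 2) * 4 ^ (k + 2) : ℕ) : ℝ)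
          / (16 * (h + 1) * (h + 2)) := by
        rw [Finset.sum_div]
        push_cast
        exact Finset.sum_congr rfl fun k _ => by have := idB h k; push_cast at this; exact this
    _ ≤ (5 ^ (h + 2) : ℝ) / (16 * (h + 1) * (h + 2)) := by
        gcongr
        exact_mod_cast natB h

/-- There is a constant `C > 0` such that for all `h ≥ 1`,
`∑_{k=0}^{h} (h choose k) * catalan k ≤ C * 5^h / h^(3/2)`. -/
theorem catalan_binomial_sum_bound :
    ∃ C : ℝ, 0 < C ∧ ∀ h : ℕ, 1 ≤ h →
      (∑ k ∈ Finset.range (h + 1), (h.choose k * catalan k : ℝ)) ≤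
        C * 5 ^ h / (h : ℝ) ^ ((3 : ℝ) / 2) := by
  refine ⟨2, by norm_num, fun h hh => ?_⟩
  set a : ℕ → ℝ := fun k => (h.choose k : ℝ) * 4 ^ k / (k + 1) with ha
  set b : ℕ → ℝ := fun k => (h.choose k : ℝ) * 4 ^ k / ((k + 1) * (k + 2)) with hb
  have hann : ∀ k, 0 ≤ a k := fun k => by positivity
  have hbnn : ∀ k, 0 ≤ b k := fun k => by positivity
  have hh1 : (1 : ℝ) ≤ (h : ℝ) := by exact_mod_cast hh
  have hhpos : (0 : ℝ) < h := by linarith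
  -- pointwise bound
  have point : ∀ k : ℕ, (h.choose k * catalan k : ℝ) ≤
      Real.sqrt 2 * (Real.sqrt (a k) * Real.sqrt (b k)) := by
    intro k
    have hab : Real.sqrt 2 * (Real.sqrt (a k) * Real.sqrt (b k))
        = Real.sqrt (2 * (a k * b k)) := by
      rw [Real.sqrt_mul (by norm_num), Real.sqrt_mul (hann k)]
    rw [hab]
    have hc2 : ((h.choose k : ℝ) * catalan k) ^ 2 ≤ 2 * (a k * b k) := by
      have hnat : ((h.choose k * catalan k) ^ 2 : ℕ) * ((k + 1) ^ 2 * (k + 2))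
          ≤ 2 * (h.choose k ^ 2 * 16 ^ k) := by
        have := nat_point k
        calc (h.choose k * catalan k) ^ 2 * ((k + 1) ^ 2 * (k + 2))
            = h.choose k ^ 2 * (catalan k ^ 2 * ((k + 1) ^ 2 * (k + 2))) := by ring
          _ ≤ h.choose k ^ 2 * (2 * 16 ^ k) := Nat.mul_le_mul_left _ this
          _ = 2 * (h.choose k ^ 2 * 16 ^ k) := by ring
      have hnat' : ((h.choose k : ℝ) * catalan k) ^ 2 * ((k + 1) ^ 2 * (k + 2))
          ≤ 2 * ((h.choose k : ℝ) ^ 2 * 16 ^ k) := by exact_mod_cast hnat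
      have habval : 2 * (a k * b k)
          = 2 * ((h.choose k : ℝ) ^ 2 * 16 ^ k) / ((k + 1) ^ 2 * (k + 2)) := by
        simp only [ha, hb]
        rw [show (16 : ℝ) ^ k = 4 ^ k * 4 ^ k by rw [← mul_pow]; norm_num]
        field_simp
      rw [habval, le_div_iff₀ (by positivity)]
      exact hnat'
    calc ((h.choose k : ℝ) * catalan k) ≤ Real.sqrt ((((h.choose k : ℝ)) * catalan k) ^ 2) := by
          rw [Real.sqrt_sq (by positivity)]
      _ ≤ Real.sqrt (2 * (a k * b k)) := Real.sqrt_le_sqrt hc2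
  -- sum up, Cauchy-Schwarz
  have step1 : (∑ k ∈ Finset.range (h + 1), (h.choose k * catalan k : ℝ))
      ≤ Real.sqrt 2 * (Real.sqrt (∑ k ∈ range (h + 1), a k) *
          Real.sqrt (∑ k ∈ range (h + 1), b k)) := by
    calc (∑ k ∈ Finset.range (h + 1), (h.choose k * catalan k : ℝ))
        ≤ ∑ k ∈ range (h + 1), Real.sqrt 2 * (Real.sqrt (a k) * Real.sqrt (b k)) :=
          Finset.sum_le_sum fun k _ => point k
      _ = Real.sqrt 2 * ∑ k ∈ range (h + 1), Real.sqrt (a k) * Real.sqrt (b k) := by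
          rw [Finset.mul_sum]
      _ ≤ Real.sqrt 2 * (Real.sqrt (∑ k ∈ range (h + 1), a k) *
            Real.sqrt (∑ k ∈ range (h + 1), b k)) :=
          mul_le_mul_of_nonneg_left (Real.sum_sqrt_mul_sqrt_le _ hann hbnn) (Real.sqrt_nonneg 2)
  have step2 : Real.sqrt 2 * (Real.sqrt (∑ k ∈ range (h + 1), a k) *
      Real.sqrt (∑ k ∈ range (h + 1), b k))
      ≤ Real.sqrt (2 * (5 ^ (h + 1) / (4 * (h + 1)) * (5 ^ (h + 2) / (16 * (h + 1) * (h + 2))))) := by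
    rw [Real.sqrt_mul (by norm_num), Real.sqrt_mul (by positivity)]
    refine mul_le_mul_of_nonneg_left ?_ (Real.sqrt_nonneg 2)
    exact mul_le_mul (Real.sqrt_le_sqrt (sumA h)) (Real.sqrt_le_sqrt (sumB h))
      (Real.sqrt_nonneg _) (Real.sqrt_nonneg _)
  -- final numeric step
  set t : ℝ := (h : ℝ) ^ ((3 : ℝ) / 2) with ht
  have htpos : 0 < t := Real.rpow_pos_of_pos hhpos _
  have ht2 : t ^ 2 = (h : ℝ) ^ 3 := by
    rw [ht, ← Real.rpow_natCast ((h : ℝ) ^ ((3 : ℝ) / 2)) 2, ← Real.rpow_mul (le_of_lt hhpos)]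
    norm_num
  have final : Real.sqrt (2 * (5 ^ (h + 1) / (4 * (h + 1)) * (5 ^ (h + 2) / (16 * (h + 1) * (h + 2)))))
      ≤ 2 * 5 ^ h / t := by
    have hsq : (2 * 5 ^ h / t) ^ 2 = 4 * ((5 : ℝ) ^ h) ^ 2 / (h : ℝ) ^ 3 := by
      rw [div_pow, ht2]; ring_nf
    have hle : 2 * ((5 : ℝ) ^ (h + 1) / (4 * (h + 1)) * (5 ^ (h + 2) / (16 * (h + 1) * (h + 2))))
        ≤ 4 * ((5 : ℝ) ^ h) ^ 2 / (h : ℝ) ^ 3 := by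
      have e1 : (5 : ℝ) ^ (h + 1) = 5 * 5 ^ h := by ring
      have e2 : (5 : ℝ) ^ (h + 2) = 25 * 5 ^ h := by ring
      rw [e1, e2, div_mul_div_comm, ← mul_div_assoc,
        div_le_div_iff₀ (by positivity) (by positivity)]
      have hcube : (h : ℝ) ^ 3 ≤ ((h : ℝ) + 1) ^ 2 * ((h : ℝ) + 2) := by nlinarith
      nlinarith [mul_le_mul_of_nonneg_left hcube (sq_nonneg ((5:ℝ) ^ h)), sq_nonneg ((5:ℝ) ^ h)]
    calc Real.sqrt (2 * (5 ^ (h + 1) / (4 * (h + 1)) * (5 ^ (h + 2) / (16 * (h + 1) * (h + 2)))))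
        ≤ Real.sqrt ((2 * 5 ^ h / t) ^ 2) := by
          apply Real.sqrt_le_sqrt; rw [hsq]; exact hle
      _ = 2 * 5 ^ h / t := Real.sqrt_sq (by positivity)
  calc (∑ k ∈ Finset.range (h + 1), (h.choose k * catalan k : ℝ))
      ≤ _ := step1
    _ ≤ _ := step2
    _ ≤ 2 * 5 ^ h / t := final
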